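/- For all n ≥ 0, Σ_{j=0}^n q^{j^2} [n choose j]_q^2 = [2n choose n]_q. -/

import Mathlib

/-- The q-Pochhammer symbol `(a;q)_n`. -/
noncomputable def qPoch (a q : ℝ) (n : ℕ) : ℝ := ∏ j ∈ Finset.range n, (1 - q ^ j * a)

/-- The Gaussian (q-)binomial coefficient `[n choose k]_q`. -/
noncomputable def qbinom (q : ℝ) (n k : ℕ) : ℝ :=
  qPoch q q n / (qPoch q q k * qPoch q q (n - k))

/-- Recursive Gaussian binomial. -/
noncomputable def qN (q : ℝ) : ℕ → ℕ → ℝ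
  | _, 0 => 1
  | 0, _+1 => 0
  | n+1, k+1 => qN q n k + q^(k+1) * qN q n (k+1)

lemma qN_zero_right (q : ℝ) (n : ℕ) : qN q n 0 = 1 := by cases n <;> rfl

lemma qN_succ (q : ℝ) (n k : ℕ) :
    qN q (n+1) (k+1) = qN q n k + q^(k+1) * qN q n (k+1) := rfl

lemma qN_eq_zero (q : ℝ) : ∀ n k, n < k → qN q n k = 0 := by
  intro n
  induction n with
  | zero => intro k hk; cases k with
    | zero => omega
    | succ k => rfl
  | succ n ih =>
    intro k hk
    cases k with
    | zero => omega
    | succ k =>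
      rw [qN_succ, ih k (by omega), ih (k+1) (by omega)]
      ring

lemma qN_self (q : ℝ) (n : ℕ) : qN q n n = 1 := by
  induction n with
  | zero => rfl
  | succ n ih => rw [qN_succ, ih, qN_eq_zero q n (n+1) (by omega)]; ring

lemma qPoch_succ (q : ℝ) (n : ℕ) : qPoch q q (n+1) = qPoch q q n * (1 - q^(n+1)) := by
  rw [qPoch, Finset.prod_range_succ, ← qPoch, pow_succ]

lemma qPoch_pos (q : ℝ) (hq0 : 0 < q) (hq1 : q < 1) (n : ℕ) : 0 < qPoch q q n := by
  apply Finset.prod_pos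
  intro j _
  have : q ^ j * q < 1 := by
    calc q ^ j * q ≤ 1 * q := by
          apply mul_le_mul_of_nonneg_right (pow_le_one₀ hq0.le hq1.le) hq0.le
    _ < 1 := by linarith
  linarith

lemma qbinom_pascal (q : ℝ) (hq0 : 0 < q) (hq1 : q < 1) (k d : ℕ) :
    qbinom q (k+1+d) k + q^(k+1) * qbinom q (k+1+d) (k+1) = qbinom q (k+1+d+1) (k+1) := by
  have h1 : k+1+d - k = d+1 := by omega
  have h2 : k+1+d - (k+1) = d := by omega
  have h3 : k+1+d+1 - (k+1) = d+1 := by omega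
  rw [qbinom, qbinom, qbinom, h1, h2, h3]
  have Pk := (qPoch_pos q hq0 hq1 k).ne'
  have Pd := (qPoch_pos q hq0 hq1 d).ne'
  have Pk1 := (qPoch_pos q hq0 hq1 (k+1)).ne'
  have Pd1 := (qPoch_pos q hq0 hq1 (d+1)).ne'
  have hlt : ∀ m : ℕ, q ^ (m+1) < 1 := fun m => pow_lt_one₀ hq0.le hq1 (by omega)
  have e1 : (1 - q^(k+1)) ≠ 0 := by have := hlt k; linarith
  have e2 : (1 - q^(d+1)) ≠ 0 := by have := hlt d; linarith
  have e3 : (1 - q^(k+1+d+1)) ≠ 0 := by have := hlt (k+d+1); rw [show k+1+d+1 = k+d+1+1 from by omega]; linarith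
  rw [qPoch_succ q (k+1+d), qPoch_succ q k, qPoch_succ q d]
  field_simp
  rw [show k+1+d+1 = (k+1)+(d+1) from by omega, pow_add]
  ring

lemma qbinom_self (q : ℝ) (hq0 : 0 < q) (hq1 : q < 1) (n : ℕ) : qbinom q n n = 1 := by
  rw [qbinom, Nat.sub_self]
  have : qPoch q q 0 = 1 := by simp [qPoch]
  rw [this, mul_one, div_self (qPoch_pos q hq0 hq1 n).ne']

lemma qbinom_zero (q : ℝ) (hq0 : 0 < q) (hq1 : q < 1) (n : ℕ) : qbinom q n 0 = 1 := by
  rw [qbinom, Nat.sub_zero]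
  have : qPoch q q 0 = 1 := by simp [qPoch]
  rw [this, one_mul, div_self (qPoch_pos q hq0 hq1 n).ne']

lemma qbinom_eq_qN (q : ℝ) (hq0 : 0 < q) (hq1 : q < 1) :
    ∀ n k, k ≤ n → qbinom q n k = qN q n k := by
  intro n
  induction n with
  | zero =>
    intro k hk
    interval_cases k
    rw [qbinom_zero q hq0 hq1, qN_zero_right]
  | succ n ih =>
    intro k hk
    cases k with
    | zero => rw [qbinom_zero q hq0 hq1, qN_zero_right]
    | succ k =>
      rcases eq_or_lt_of_le hk with h | h
      · rw [← h] at *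
        rw [qbinom_self q hq0 hq1, qN_self]
      · have hk' : k + 1 ≤ n := by omega
        obtain ⟨d, hd⟩ : ∃ d, n = k + 1 + d := ⟨n - (k+1), by omega⟩
        rw [qN_succ, ← ih k (by omega), ← ih (k+1) hk', hd,
          ← qbinom_pascal q hq0 hq1 k d]

lemma qbinom_symm (q : ℝ) (n k : ℕ) (hk : k ≤ n) :
    qbinom q n (n - k) = qbinom q n k := by
  rw [qbinom, qbinom, Nat.sub_sub_self hk, mul_comm]

lemma qN_vdm (q : ℝ) (hq0 : 0 < q) (hq1 : q < 1) :
    ∀ m n k, qN q (m+n) k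
      = ∑ j ∈ Finset.range (k+1), q^((m-j)*(k-j)) * qN q m j * qN q n (k-j) := by
  intro m
  induction m with
  | zero =>
    intro n k
    rw [Finset.sum_eq_single_of_mem 0 (Finset.mem_range.2 (by omega))]
    · simp [qN_zero_right]
    · intro j _ hj
      obtain ⟨i, rfl⟩ : ∃ i, j = i + 1 := ⟨j - 1, by omega⟩
      rw [qN_eq_zero q 0 (i+1) (by omega)]
      ring
  | succ m ih =>
    intro n k
    cases k with
    | zero =>
      simp [show m+1+n = (m+n)+1 from by omega, qN_zero_right]
    | succ k =>
      rw [show m+1+n = (m+n)+1 from by omega, qN_succ, ih n k, ih n (k+1),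
        Finset.sum_range_succ' (fun j => q^((m-j)*(k+1-j)) * qN q m j * qN q n (k+1-j)) (k+1),
        Finset.sum_range_succ' (fun j => q^((m+1-j)*(k+1-j)) * qN q (m+1) j * qN q n (k+1-j)) (k+1)]
      simp only [Nat.succ_sub_succ, Nat.sub_zero, qN_zero_right, mul_one, one_mul,
        qN_succ]
      simp only [add_mul, Finset.sum_add_distrib, mul_add, Finset.mul_sum, ← mul_assoc,
        ← pow_add]
      rw [← add_assoc]
      congr 1
      · congr 1
        apply Finset.sum_congr rfl
        intro i hi
        have hik : i ≤ k := by simpa using Nat.lt_succ_iff.mp (Finset.mem_range.mp hi)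
        rcases le_or_gt (i+1) m with him | him
        · congr 2
          have hmi : m - i = m - (i+1) + 1 := by omega
          rw [hmi, add_mul, one_mul, show k + 1 = (k - i) + (i+1) from by omega]
          ring
        · rw [qN_eq_zero q m (i+1) him]
          ring
      · congr 2
        ring

theorem q_vandermonde_central (q : ℝ) (hq0 : 0 < q) (hq1 : q < 1) :
    ∀ n : ℕ, ∑ j ∈ Finset.range (n + 1), q ^ (j ^ 2) * (qbinom q n j) ^ 2
      = qbinom q (2 * n) n := by
  intro n
  rw [two_mul, qbinom_eq_qN q hq0 hq1 (n+n) n (by omega), qN_vdm q hq0 hq1,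
    ← Finset.sum_range_reflect (fun j => q ^ (j ^ 2) * (qbinom q n j) ^ 2) (n+1)]
  apply Finset.sum_congr rfl
  intro j hj
  have hjn : j ≤ n := by simpa using Nat.lt_succ_iff.mp (Finset.mem_range.mp hj)
  have h1 : n + 1 - 1 - j = n - j := by omega
  rw [h1, ← qbinom_eq_qN q hq0 hq1 n j hjn, ← qbinom_eq_qN q hq0 hq1 n (n-j) (by omega),
    ← qbinom_symm q n j hjn, show (n-j)^2 = (n-j)*(n-j) from sq (n-j)]
  ring
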